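/- For every 3-periodic billiard orbit of E with vertices A, B, C and side lengths ℓ_A, ℓ_B, ℓ_C, the Mittenpunkt of the orbit is stationary at the center of the billiard: ℓ_A(ℓ_B + ℓ_C − ℓ_A)·A + ℓ_B(ℓ_C + ℓ_A − ℓ_B)·B + ℓ_C(ℓ_A + ℓ_B − ℓ_C)·C = (0,0), i.e., the triangle center X₉ with barycentric coordinates ℓ_A(ℓ_B + ℓ_C − ℓ_A) : ℓ_B(ℓ_C + ℓ_A − ℓ_B) : ℓ_C(ℓ_A + ℓ_B − ℓ_C) equals the origin. -/

import Mathlib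

open scoped RealInnerProductSpace

noncomputable section

abbrev Pt : Type := EuclideanSpace ℝ (Fin 2)

/-- f(x,y) = x²/a² + y²/b² -/
def fE (a b : ℝ) (p : Pt) : ℝ := (p 0) ^ 2 / a ^ 2 + (p 1) ^ 2 / b ^ 2

/-- ∇f(x,y) = (2x/a², 2y/b²) -/
def gradE (a b : ℝ) (p : Pt) : Pt :=
  (WithLp.equiv 2 (Fin 2 → ℝ)).symm ![2 * p 0 / a ^ 2, 2 * p 1 / b ^ 2]

/-- unit vector from `p` to `q` -/
def uvec (p q : Pt) : Pt := ‖q - p‖⁻¹ • (q - p)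

/-- An N-periodic billiard orbit in the ellipse with semiaxes a, b:
vertices on the ellipse, consecutive vertices distinct, and the elastic
reflection law `u_i = u_{i-1} - 2 (u_{i-1}·n_i) n_i` at each bounce. -/
def IsOrbit (a b : ℝ) {N : ℕ} (P : ZMod N → Pt) : Prop :=
  (∀ i, fE a b (P i) = 1) ∧ (∀ i, P (i + 1) ≠ P i) ∧
  ∀ i : ZMod N,
    uvec (P i) (P (i + 1)) =
      uvec (P (i - 1)) (P i) -
        (2 * ⟪uvec (P (i - 1)) (P i), ‖gradE a b (P i)‖⁻¹ • gradE a b (P i)⟫) •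
          (‖gradE a b (P i)‖⁻¹ • gradE a b (P i))

/-- Joachimsthal quantity (1/2)·(u_{i−1} · ∇f(P i)) at bounce i. -/
def joach (a b : ℝ) {N : ℕ} (P : ZMod N → Pt) (i : ZMod N) : ℝ :=
  (1 / 2) * ⟪uvec (P (i - 1)) (P i), gradE a b (P i)⟫

/-- planar cross product (determinant) -/
def cross (u v : Pt) : ℝ := u 0 * v 1 - u 1 * v 0

/-- Convex orbit: for each side, all other vertices lie strictly on one
and the same side of the line through P i and P (i+1). -/
def IsConvexOrbit (a b : ℝ) {N : ℕ} (P : ZMod N → Pt) : Prop :=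
  IsOrbit a b P ∧
  ∀ i : ZMod N,
    (∀ j, j ≠ i → j ≠ i + 1 → 0 < cross (P (i + 1) - P i) (P j - P i)) ∨
    (∀ j, j ≠ i → j ≠ i + 1 → cross (P (i + 1) - P i) (P j - P i) < 0)

/-- side length ℓ_A = ‖B − C‖ -/
def lA (P : ZMod 3 → Pt) : ℝ := ‖P 1 - P 2‖
/-- side length ℓ_B = ‖C − A‖ -/
def lB (P : ZMod 3 → Pt) : ℝ := ‖P 2 - P 0‖
/-- side length ℓ_C = ‖A − B‖ -/
def lC (P : ZMod 3 → Pt) : ℝ := ‖P 0 - P 1‖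
/-- semiperimeter -/
def sper (P : ZMod 3 → Pt) : ℝ := (lA P + lB P + lC P) / 2
/-- area Δ = |det(B − A, C − A)|/2 -/
def areaT (P : ZMod 3 → Pt) : ℝ := |cross (P 1 - P 0) (P 2 - P 0)| / 2
/-- inradius r = Δ/s -/
def inradius (P : ZMod 3 → Pt) : ℝ := areaT P / sper P
/-- circumradius R = ℓ_A ℓ_B ℓ_C/(4Δ) -/
def circumradius (P : ZMod 3 → Pt) : ℝ := lA P * lB P * lC P / (4 * areaT P)
/-- incenter I = (ℓ_A·A + ℓ_B·B + ℓ_C·C)/(2s) -/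
def incenterT (P : ZMod 3 → Pt) : Pt :=
  (2 * sper P)⁻¹ • (lA P • P 0 + lB P • P 1 + lC P • P 2)

lemma inner_coords (u v : Pt) : ⟪u, v⟫ = u 0 * v 0 + u 1 * v 1 := by
  simp [PiLp.inner_apply, Fin.sum_univ_two, RCLike.inner_apply]; ring

lemma ptsub (u v : Pt) (i : Fin 2) : (u - v) i = u i - v i := rfl
lemma gE0 (a b : ℝ) (p : Pt) : gradE a b p 0 = 2 * p 0 / a ^ 2 := rfl
lemma gE1 (a b : ℝ) (p : Pt) : gradE a b p 1 = 2 * p 1 / b ^ 2 := rfl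

lemma refl_scalar {u u' g : Pt} (hg : g ≠ 0)
    (h : u' = u - (2 * ⟪u, ‖g‖⁻¹ • g⟫) • (‖g‖⁻¹ • g)) :
    ⟪u', g⟫ = -⟪u, g⟫ := by
  have hgn : ‖g‖ ≠ 0 := norm_ne_zero_iff.mpr hg
  subst h
  rw [inner_sub_left, real_inner_smul_left, real_inner_smul_left, real_inner_smul_right,
    real_inner_self_eq_norm_mul_norm]
  field_simp; ring


set_option maxHeartbeats 1000000 in
/-- the Mittenpunkt X₉ of every 3-periodic orbit is stationary at
the billiard's center (the origin). -/
theorem mittenpunkt_stationary (a b : ℝ) (hb : 0 < b) (hab : b ≤ a)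
    (P : ZMod 3 → Pt) (hP : IsOrbit a b P) :
    (lA P * (lB P + lC P - lA P)) • P 0 + (lB P * (lC P + lA P - lB P)) • P 1 +
      (lC P * (lA P + lB P - lC P)) • P 2 = (0 : Pt) := by
  obtain ⟨hf, hne, hrefl⟩ := hP
  have ha : 0 < a := lt_of_lt_of_le hb hab
  have grad_ne : ∀ i : ZMod 3, gradE a b (P i) ≠ 0 := by
    intro i h
    have h0 : (2:ℝ) * P i 0 / a^2 = 0 := by
      rw [show (2:ℝ) * P i 0 / a^2 = gradE a b (P i) 0 from rfl, h]; rfl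
    have h1 : (2:ℝ) * P i 1 / b^2 = 0 := by
      rw [show (2:ℝ) * P i 1 / b^2 = gradE a b (P i) 1 from rfl, h]; rfl
    have hp0 : P i 0 = 0 := by field_simp at h0; linarith
    have hp1 : P i 1 = 0 := by field_simp at h1; linarith
    have := hf i
    rw [fE, hp0, hp1] at this
    norm_num at this
  have key : ∀ i : ZMod 3, ⟪uvec (P i) (P (i+1)), gradE a b (P i)⟫
      = -⟪uvec (P (i-1)) (P i), gradE a b (P i)⟫ :=
    fun i => refl_scalar (grad_ne i) (hrefl i)
  have k1 := key 1
  rw [show ((1:ZMod 3)+1) = 2 by decide, show ((1:ZMod 3)-1) = 0 by decide] at k1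
  simp only [uvec, real_inner_smul_left, inner_coords, ptsub, gE0, gE1] at k1
  rw [norm_sub_rev (P 2) (P 1), norm_sub_rev (P 1) (P 0)] at k1
  have k2 := key 2
  rw [show ((2:ZMod 3)+1) = 0 by decide, show ((2:ZMod 3)-1) = 1 by decide] at k2
  simp only [uvec, real_inner_smul_left, inner_coords, ptsub, gE0, gE1] at k2
  rw [norm_sub_rev (P 0) (P 2), norm_sub_rev (P 2) (P 1)] at k2
  -- distinctness
  have hne0 : P 0 ≠ P 1 := by have := hne 0; rwa [show ((0:ZMod 3)+1) = 1 by decide, ne_comm] at this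
  have hne1 : P 1 ≠ P 2 := by have := hne 1; rwa [show ((1:ZMod 3)+1) = 2 by decide, ne_comm] at this
  have hne2 : P 2 ≠ P 0 := by have := hne 2; rwa [show ((2:ZMod 3)+1) = 0 by decide, ne_comm] at this
  set la := ‖P 1 - P 2‖ with hlaE
  set lb := ‖P 2 - P 0‖ with hlbE
  set lc := ‖P 0 - P 1‖ with hlcE
  have hla : 0 < la := by rw [hlaE]; exact norm_sub_pos_iff.mpr (sub_ne_zero.mp (sub_ne_zero.mpr hne1))
  have hlb : 0 < lb := by rw [hlbE]; exact norm_sub_pos_iff.mpr (sub_ne_zero.mp (sub_ne_zero.mpr hne2))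
  have hlc : 0 < lc := by rw [hlcE]; exact norm_sub_pos_iff.mpr (sub_ne_zero.mp (sub_ne_zero.mpr hne0))

  -- ellipse membership in coordinates
  have h1 := hf 0
  have h2 := hf 1
  have h3 := hf 2
  simp only [fE] at h1 h2 h3
  -- squared length of side c
  have hc2 : (P 1 0 - P 0 0)^2 + (P 1 1 - P 0 1)^2 = lc^2 := by
    rw [hlcE, ← real_inner_self_eq_norm_sq, inner_coords]
    simp only [ptsub]; ring
  set J := (1 - (P 0 0 * P 1 0 / a^2 + P 0 1 * P 1 1 / b^2)) / lc with hJE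
  have hgAB : P 0 0 * P 1 0 / a^2 + P 0 1 * P 1 1 / b^2 = 1 - J * lc := by
    rw [hJE]; field_simp; ring
  have hinv_la : la⁻¹ * la = 1 := inv_mul_cancel₀ hla.ne'
  have hinv_lb : lb⁻¹ * lb = 1 := inv_mul_cancel₀ hlb.ne'
  have hinv_lc : lc⁻¹ * lc = 1 := inv_mul_cancel₀ hlc.ne'
  have hgBC : P 1 0 * P 2 0 / a^2 + P 1 1 * P 2 1 / b^2 = 1 - J * la := by
    linear_combination (la/2) * k1
      - (P 1 0 * P 2 0 / a^2 + P 1 1 * P 2 1 / b^2 - (P 1 0^2 / a^2 + P 1 1^2 / b^2)) * hinv_la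
      - (J * la) * hinv_lc - (la * lc⁻¹ - 1) * h2 + (la * lc⁻¹) * hgAB
  have hgCA : P 0 0 * P 2 0 / a^2 + P 0 1 * P 2 1 / b^2 = 1 - J * lb := by
    linear_combination (lb/2) * k2
      - (P 0 0 * P 2 0 / a^2 + P 0 1 * P 2 1 / b^2 - (P 2 0^2 / a^2 + P 2 1^2 / b^2)) * hinv_lb
      - (J * lb) * hinv_la - (lb * la⁻¹ - 1) * h3 + (lb * la⁻¹) * hgBC
  -- J is positive
  have hJlc : 2*J*lc = (P 1 0 - P 0 0)^2 / a^2 + (P 1 1 - P 0 1)^2 / b^2 := by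
    linear_combination -h1 - h2 + 2*hgAB
  have hbb : (0:ℝ) < b^2 := by positivity
  have haa : (0:ℝ) < a^2 := by positivity
  have hba : b^2 ≤ a^2 := by nlinarith [sq_nonneg (a-b), sq_nonneg (a+b)]
  have h2J : 0 < 2*J*lc := by
    rw [hJlc]
    have e3 : (P 1 1 - P 0 1)^2 / a^2 ≤ (P 1 1 - P 0 1)^2 / b^2 :=
      div_le_div_of_nonneg_left (sq_nonneg _) hbb hba
    have e4 : 0 < ((P 1 0 - P 0 0)^2 + (P 1 1 - P 0 1)^2) / a^2 := by
      rw [hc2]; positivity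
    rw [add_div] at e4
    linarith
  have hJpos : 0 < J := by
    rcases le_or_gt J 0 with h | h
    · exfalso; nlinarith [mul_nonneg (neg_nonneg.mpr h) hlc.le]
    · exact h
  -- non-collinearity
  have hsg : ((P 1 0 * P 2 1 - P 1 1 * P 2 0) + (P 2 0 * P 0 1 - P 2 1 * P 0 0) + (P 0 0 * P 1 1 - P 0 1 * P 1 0)) ≠ 0 := by
    intro hσ0
    have hv0 : 2*J*lc*(P 2 0 - P 0 0) = J*(lb+lc-la)*(P 1 0 - P 0 0) := by
      linear_combination (-(P 1 1 - P 0 1)/b^2) * hσ0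
        + (P 2 0 - P 0 0) * (-h1 - h2 + 2*hgAB)
        + (P 1 0 - P 0 0) * (hgBC - hgAB - hgCA + h1)
    have hv1 : 2*J*lc*(P 2 1 - P 0 1) = J*(lb+lc-la)*(P 1 1 - P 0 1) := by
      linear_combination ((P 1 0 - P 0 0)/a^2) * hσ0
        + (P 2 1 - P 0 1) * (-h1 - h2 + 2*hgAB)
        + (P 1 1 - P 0 1) * (hgBC - hgAB - hgCA + h1)
    have heq1 : (J*J) * (2*lb*lc) = (J*J) * ((lb+lc-la)*lc) := by
      linear_combination (-(P 0 0)/a^2) * hv0 + (-(P 0 1)/b^2) * hv1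
        + 2*J*lc*(hgCA - h1) - J*(lb+lc-la)*(hgAB - h1)
    have heq2 : (J*J) * (2*lc*lb) = (J*J) * ((lb+lc-la)*(lb-la)) := by
      linear_combination ((P 2 0)/a^2) * hv0 + ((P 2 1)/b^2) * hv1
        - 2*J*lc*(h3 - hgCA) + J*(lb+lc-la)*(hgBC - hgCA)
    have hJ2 : (J*J) ≠ 0 := ne_of_gt (mul_pos hJpos hJpos)
    have hr1 : 2*lb*lc = (lb+lc-la)*lc := mul_left_cancel₀ hJ2 heq1
    have hr2 : 2*lc*lb = (lb+lc-la)*(lb-la) := mul_left_cancel₀ hJ2 heq2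
    have hr1' : lc * (lb + la - lc) = 0 := by linear_combination hr1
    have hlc' : lc = la + lb := by
      rcases mul_eq_zero.mp hr1' with h | h
      · exact absurd h hlc.ne'
      · linarith
    rw [hlc'] at hr2
    have h4 : 4*(la*lb) = 0 := by linear_combination hr2
    linarith only [h4, mul_pos hla hlb]
  -- the three linear relations
  have hEA : (P 1 0 * P 2 1 - P 1 1 * P 2 0) + (P 2 0 * P 0 1 - P 2 1 * P 0 0) * (1 - J*lc) + (P 0 0 * P 1 1 - P 0 1 * P 1 0) * (1 - J*lb) = 0 := by
    linear_combination (-(P 1 0 * P 2 1 - P 1 1 * P 2 0)) * h1 - (P 2 0 * P 0 1 - P 2 1 * P 0 0) * hgAB - (P 0 0 * P 1 1 - P 0 1 * P 1 0) * hgCA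
  have hEB : (P 1 0 * P 2 1 - P 1 1 * P 2 0) * (1 - J*lc) + (P 2 0 * P 0 1 - P 2 1 * P 0 0) + (P 0 0 * P 1 1 - P 0 1 * P 1 0) * (1 - J*la) = 0 := by
    linear_combination (-(P 1 0 * P 2 1 - P 1 1 * P 2 0)) * hgAB - (P 2 0 * P 0 1 - P 2 1 * P 0 0) * h2 - (P 0 0 * P 1 1 - P 0 1 * P 1 0) * hgBC
  have hEC : (P 1 0 * P 2 1 - P 1 1 * P 2 0) * (1 - J*lb) + (P 2 0 * P 0 1 - P 2 1 * P 0 0) * (1 - J*la) + (P 0 0 * P 1 1 - P 0 1 * P 1 0) = 0 := by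
    linear_combination (-(P 1 0 * P 2 1 - P 1 1 * P 2 0)) * hgCA - (P 2 0 * P 0 1 - P 2 1 * P 0 0) * hgBC - (P 0 0 * P 1 1 - P 0 1 * P 1 0) * h3
  have hq1 : 2*lb*lc*J*(P 1 0 * P 2 1 - P 1 1 * P 2 0) = ((P 1 0 * P 2 1 - P 1 1 * P 2 0) + (P 2 0 * P 0 1 - P 2 1 * P 0 0) + (P 0 0 * P 1 1 - P 0 1 * P 1 0)) * (lb+lc-la) := by
    linear_combination la * hEA - lb * hEB - lc * hEC
  have hq2 : 2*la*lc*J*(P 2 0 * P 0 1 - P 2 1 * P 0 0) = ((P 1 0 * P 2 1 - P 1 1 * P 2 0) + (P 2 0 * P 0 1 - P 2 1 * P 0 0) + (P 0 0 * P 1 1 - P 0 1 * P 1 0)) * (lc+la-lb) := by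
    linear_combination (-la) * hEA + lb * hEB - lc * hEC
  have hq3 : 2*la*lb*J*(P 0 0 * P 1 1 - P 0 1 * P 1 0) = ((P 1 0 * P 2 1 - P 1 1 * P 2 0) + (P 2 0 * P 0 1 - P 2 1 * P 0 0) + (P 0 0 * P 1 1 - P 0 1 * P 1 0)) * (la+lb-lc) := by
    linear_combination (-la) * hEA - lb * hEB + lc * hEC
  -- conclude componentwise
  simp only [lA, lB, lC]
  rw [← hlaE, ← hlbE, ← hlcE]
  ext k
  fin_cases k
  · simp only [Fin.zero_eta, Fin.mk_one, PiLp.add_apply, PiLp.smul_apply, PiLp.zero_apply, smul_eq_mul]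
    have h0 : ((P 1 0 * P 2 1 - P 1 1 * P 2 0) + (P 2 0 * P 0 1 - P 2 1 * P 0 0) + (P 0 0 * P 1 1 - P 0 1 * P 1 0)) * (la*(lb+lc-la) * P 0 0 + lb*(lc+la-lb) * P 1 0 + lc*(la+lb-lc) * P 2 0) = 0 := by
      linear_combination (-(la * P 0 0)) * hq1 + (-(lb * P 1 0)) * hq2 + (-(lc * P 2 0)) * hq3
    have h0' := (mul_eq_zero.mp h0).resolve_left hsg
    linear_combination h0'
  · simp only [Fin.zero_eta, Fin.mk_one, PiLp.add_apply, PiLp.smul_apply, PiLp.zero_apply, smul_eq_mul]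
    have h0 : ((P 1 0 * P 2 1 - P 1 1 * P 2 0) + (P 2 0 * P 0 1 - P 2 1 * P 0 0) + (P 0 0 * P 1 1 - P 0 1 * P 1 0)) * (la*(lb+lc-la) * P 0 1 + lb*(lc+la-lb) * P 1 1 + lc*(la+lb-lc) * P 2 1) = 0 := by
      linear_combination (-(la * P 0 1)) * hq1 + (-(lb * P 1 1)) * hq2 + (-(lc * P 2 1)) * hq3
    have h0' := (mul_eq_zero.mp h0).resolve_left hsg
    linear_combination h0'
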